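/- Let 0 < q ≤ 32/27, let v₊ be a real root of v³ − 2qv − q² = 0 with −3q/4 ≤ v₊ < −q/2, and set v₋ = q/v₊. Then: (a) v₊ ⋈_q v₊ = v₋; (b) v₋ ∥ v₋ = v₊; (c) the interval [v₋, v₊] is self-dual, i.e. if v ∈ [v₋, v₊] then q/v ∈ [v₋, v₊]; (d) if v, w ∈ [v₋, v₊] then v ∥ w ∈ [v₋, v₊]; (e) if v, w ∈ [v₋, v₊] then v ⋈_q w ∈ [v₋, v₊]. -/

import Mathlib

/-- Parallel connection of edge weights: `v₁ ∥ v₂ = (1+v₁)(1+v₂) - 1`. -/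
def parallelConn (v₁ v₂ : ℝ) : ℝ := (1 + v₁) * (1 + v₂) - 1

/-- Series connection of edge weights: `v₁ ⋈_q v₂ = v₁v₂ / (q + v₁ + v₂)`. -/
noncomputable def seriesConn (q v₁ v₂ : ℝ) : ℝ := v₁ * v₂ / (q + v₁ + v₂)

set_option maxHeartbeats 1000000 in
/-- Let `0 < q ≤ 32/27`, let `vp` be a real root of `v³ - 2qv - q² = 0` with
`-3q/4 ≤ vp < -q/2`, and set `vm = q/vp`.  Then:
(a) `vp ⋈_q vp = vm`; (b) `vm ∥ vm = vp`; (c) `[vm, vp]` is self-dual under `v ↦ q/v`;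
(d) `[vm, vp]` is closed under `∥`; (e) `[vm, vp]` is closed under `⋈_q`. -/
theorem diamond_interval_properties (q vp : ℝ) (hq0 : 0 < q) (hq : q ≤ 32 / 27)
    (hroot : vp ^ 3 - 2 * q * vp - q ^ 2 = 0) (hlb : -3 * q / 4 ≤ vp)
    (hub : vp < -q / 2) (vm : ℝ) (hv : vm = q / vp) :
    seriesConn q vp vp = vm ∧
    parallelConn vm vm = vp ∧
    (∀ v ∈ Set.Icc vm vp, q / v ∈ Set.Icc vm vp) ∧
    (∀ v ∈ Set.Icc vm vp, ∀ w ∈ Set.Icc vm vp, parallelConn v w ∈ Set.Icc vm vp) ∧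
    (∀ v ∈ Set.Icc vm vp, ∀ w ∈ Set.Icc vm vp, seriesConn q v w ∈ Set.Icc vm vp) := by
  have hvp0 : vp < 0 := by linarith
  have hvpne : vp ≠ 0 := ne_of_lt hvp0
  have hkey : vm * vp = q := by rw [hv, div_mul_cancel₀ _ hvpne]
  have hvpgt : -1 < vp := by linarith
  have hvm1 : vm ≤ -1 := by
    by_contra h
    push_neg at h
    nlinarith [mul_pos (show (0:ℝ) < -vp by linarith) (show (0:ℝ) < vm + 1 by linarith)]
  have hvm0 : vm < 0 := by linarith
  have hvmvp : vm ≤ vp := by linarith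
  have hB : (1 + vm) ^ 2 = 1 + vp := by
    have h : ((1 + vm) ^ 2 - (1 + vp)) * vp ^ 2 = 0 := by
      linear_combination (vm * vp + q + 2 * vp) * hkey - hroot
    have h2 := (mul_eq_zero.1 h).resolve_right (pow_ne_zero 2 hvpne)
    linarith
  have hvp2 : vp ^ 2 = 2 * q + q * vm := by
    have h : (vp ^ 2 - 2 * q - q * vm) * vp = 0 := by
      linear_combination hroot - q * hkey
    have h2 := (mul_eq_zero.1 h).resolve_right hvpne
    linarith
  refine ⟨?_, ?_, ?_, ?_, ?_⟩
  · -- (a) series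
    have hd : q + vp + vp < 0 := by linarith
    rw [seriesConn, hv]
    rw [div_eq_div_iff (ne_of_lt hd) hvpne]
    linear_combination hroot
  · -- (b) parallel
    rw [parallelConn]
    linear_combination hB
  · -- (c) self-dual
    rintro v ⟨h1, h2⟩
    have hv0 : v < 0 := lt_of_le_of_lt h2 hvp0
    constructor
    · rw [le_div_iff_of_neg hv0]
      nlinarith [mul_nonneg (show (0:ℝ) ≤ -vm by linarith) (show (0:ℝ) ≤ vp - v by linarith)]
    · rw [div_le_iff_of_neg hv0]
      nlinarith [mul_nonneg (show (0:ℝ) ≤ -vp by linarith) (show (0:ℝ) ≤ v - vm by linarith)]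
  · -- (d) closed under parallel
    rintro v ⟨h1, h2⟩ w ⟨h3, h4⟩
    simp only [parallelConn, Set.mem_Icc]
    constructor
    · -- lower bound: (1+v)(1+w) ≥ 1+vm
      rcases le_or_gt (1 + v) 0 with ha | ha <;> rcases le_or_gt (1 + w) 0 with hb | hb
      · nlinarith [mul_nonneg (show (0:ℝ) ≤ -(1 + v) by linarith)
          (show (0:ℝ) ≤ -(1 + w) by linarith)]
      · nlinarith [mul_nonneg (show (0:ℝ) ≤ v - vm by linarith) (show (0:ℝ) ≤ 1 + w by linarith),
          mul_nonneg (show (0:ℝ) ≤ -(1 + vm) by linarith) (show (0:ℝ) ≤ vp - w by linarith),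
          mul_nonneg (show (0:ℝ) ≤ -(1 + vm) by linarith) (show (0:ℝ) ≤ -vp by linarith)]
      · nlinarith [mul_nonneg (show (0:ℝ) ≤ w - vm by linarith) (show (0:ℝ) ≤ 1 + v by linarith),
          mul_nonneg (show (0:ℝ) ≤ -(1 + vm) by linarith) (show (0:ℝ) ≤ vp - v by linarith),
          mul_nonneg (show (0:ℝ) ≤ -(1 + vm) by linarith) (show (0:ℝ) ≤ -vp by linarith)]
      · nlinarith [mul_nonneg (show (0:ℝ) ≤ 1 + v by linarith) (show (0:ℝ) ≤ 1 + w by linarith)]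
    · -- upper bound: (1+v)(1+w) ≤ 1+vp
      rcases le_or_gt (1 + v) 0 with ha | ha <;> rcases le_or_gt (1 + w) 0 with hb | hb
      · nlinarith [mul_le_mul (show -(1 + v) ≤ -(1 + vm) by linarith)
          (show -(1 + w) ≤ -(1 + vm) by linarith) (by linarith : (0:ℝ) ≤ -(1 + w))
          (by linarith : (0:ℝ) ≤ -(1 + vm))]
      · nlinarith [mul_nonneg (show (0:ℝ) ≤ -(1 + v) by linarith)
          (show (0:ℝ) ≤ 1 + w by linarith)]
      · nlinarith [mul_nonneg (show (0:ℝ) ≤ -(1 + w) by linarith)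
          (show (0:ℝ) ≤ 1 + v by linarith)]
      · nlinarith [mul_le_mul (show 1 + v ≤ 1 + vp by linarith)
          (show 1 + w ≤ 1 + vp by linarith) (by linarith : (0:ℝ) ≤ 1 + w)
          (by linarith : (0:ℝ) ≤ 1 + vp),
          mul_nonneg (show (0:ℝ) ≤ 1 + vp by linarith) (show (0:ℝ) ≤ -vp by linarith)]
  · -- (e) closed under series
    rintro v ⟨h1, h2⟩ w ⟨h3, h4⟩
    have hd : q + v + w < 0 := by linarith
    simp only [seriesConn, Set.mem_Icc]
    constructor
    · rw [le_div_iff_of_neg hd]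
      nlinarith [mul_le_mul (show v - vm ≤ vp - vm by linarith)
        (show w - vm ≤ vp - vm by linarith) (by linarith : (0:ℝ) ≤ w - vm)
        (by linarith : (0:ℝ) ≤ vp - vm)]
    · rw [div_le_iff_of_neg hd]
      nlinarith [mul_nonneg (show (0:ℝ) ≤ vp - v by linarith)
        (show (0:ℝ) ≤ vp - w by linarith),
        mul_nonneg (show (0:ℝ) ≤ -vp by linarith) (show (0:ℝ) ≤ vp + q by linarith)]
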